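/- arXiv:1603.09184 — 2 statements merged into one kernel-verified Lean document; each statement's English description precedes it below -/
import Mathlib

section
/- Let $p > 1$, $a \geq -2$ and $M \geq \max(3, a)$. Then $|a+M|^{p-2}(a+M) - |a|^{p-2}a \geq c_p M^{p-1}$, where $c_p > 0$ is a constant depending only on $p$ (one may take $c_p = \min(1, 3^{p-2})/3^{p-1}$ or any explicit positive constant valid for the given range). -/
open Real

private lemma four_pt {f : ℝ → ℝ} (hf : ConcaveOn ℝ (Set.Ici 0) f) {a M : ℝ}
    (ha : 0 ≤ a) (hM : 0 < M) (haM : a ≤ M) : f (2*M) - f M ≤ f (a+M) - f a := by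
  have hD : 0 < 2*M - a := by linarith
  set l : ℝ := M / (2*M - a) with hl
  set m : ℝ := (M - a) / (2*M - a) with hm
  have hl0 : 0 ≤ l := by positivity
  have hm0 : 0 ≤ m := by apply div_nonneg <;> linarith
  have hsum : l + m = 1 := by rw [hl, hm, ← add_div, div_eq_iff hD.ne']; ring
  have hmem1 : a ∈ Set.Ici (0:ℝ) := ha
  have hmem2 : 2*M ∈ Set.Ici (0:ℝ) := by simp; linarith
  have h1 := hf.2 hmem1 hmem2 hl0 hm0 hsum
  have h2 := hf.2 hmem1 hmem2 hm0 hl0 (by linarith)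
  have e1 : l • a + m • (2*M) = M := by
    simp only [smul_eq_mul, hl, hm]; rw [div_mul_eq_mul_div, div_mul_eq_mul_div, ← add_div, div_eq_iff hD.ne']; ring
  have e2 : m • a + l • (2*M) = a + M := by
    simp only [smul_eq_mul, hl, hm]; rw [div_mul_eq_mul_div, div_mul_eq_mul_div, ← add_div, div_eq_iff hD.ne']; ring
  rw [e1] at h1
  rw [e2] at h2
  simp only [smul_eq_mul] at h1 h2
  have hid : f a + f (2*M) = (l * f a + m * f (2*M)) + (m * f a + l * f (2*M)) := by
    linear_combination (-(f a) - f (2*M)) * hsum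
  linarith

private lemma superadd {x y q : ℝ} (hx : 0 ≤ x) (hy : 0 ≤ y) (hq : 1 ≤ q) :
    x ^ q + y ^ q ≤ (x + y) ^ q := by
  lift x to NNReal using hx
  lift y to NNReal using hy
  have := NNReal.add_rpow_le_rpow_add x y hq
  exact_mod_cast this

/-- For `p > 1`, there is a constant `c_p > 0` (depending only on `p`)
such that for all `a ≥ -2` and `M ≥ max 3 a`,
`|a+M|^(p-2)(a+M) - |a|^(p-2) a ≥ c_p M^(p-1)`. -/
theorem stmt_0 (p : ℝ) (hp : 1 < p) :
    ∃ c : ℝ, 0 < c ∧ ∀ a M : ℝ, -2 ≤ a → max 3 a ≤ M →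
      c * M ^ (p - 1) ≤ |a + M| ^ (p - 2) * (a + M) - |a| ^ (p - 2) * a := by
  have hq : 0 < p - 1 := by linarith
  have h2q : (1:ℝ) < 2 ^ (p - 1) :=
    (Real.one_lt_rpow_iff_of_pos (by norm_num)).mpr (Or.inl ⟨one_lt_two, hq⟩)
  refine ⟨min ((1/3 : ℝ) ^ (p-1)) (min 1 (2 ^ (p-1) - 1)),
    lt_min (by positivity) (lt_min one_pos (by linarith)), ?_⟩
  intro a M ha hM
  have hM3 : (3:ℝ) ≤ M := le_trans (le_max_left _ _) hM
  have haM : a ≤ M := le_trans (le_max_right _ _) hM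
  have hMpos : (0:ℝ) < M := by linarith
  have haMpos : (0:ℝ) < a + M := by linarith
  have habs : |a + M| = a + M := abs_of_pos haMpos
  have hkey : |a + M| ^ (p - 2) * (a + M) = (a + M) ^ (p - 1) := by
    rw [habs, ← Real.rpow_add_one haMpos.ne' (p - 2)]
    ring_nf
  rw [hkey]
  set c : ℝ := min ((1/3 : ℝ) ^ (p-1)) (min 1 (2 ^ (p-1) - 1)) with hc
  rcases le_or_gt a 0 with ha0 | ha0
  · -- a ≤ 0 : |a|^(p-2)*a ≤ 0, and (a+M)^(p-1) ≥ (M/3)^(p-1)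
    have hneg : |a| ^ (p - 2) * a ≤ 0 :=
      mul_nonpos_of_nonneg_of_nonpos (Real.rpow_nonneg (abs_nonneg a) _) ha0
    have h1 : (M/3) ^ (p-1) ≤ (a + M) ^ (p-1) := by
      apply Real.rpow_le_rpow (by positivity) (by linarith) (le_of_lt hq)
    have h2 : c * M ^ (p-1) ≤ (M/3) ^ (p-1) := by
      have : (M/3) ^ (p-1) = (1/3:ℝ) ^ (p-1) * M ^ (p-1) := by
        rw [← Real.mul_rpow (by norm_num) hMpos.le]; ring_nf
      rw [this]
      exact mul_le_mul_of_nonneg_right (min_le_left _ _) (Real.rpow_nonneg hMpos.le _)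
    linarith
  · -- a > 0
    have habsa : |a| = a := abs_of_pos ha0
    have hkeya : |a| ^ (p - 2) * a = a ^ (p - 1) := by
      rw [habsa, ← Real.rpow_add_one ha0.ne' (p - 2)]
      ring_nf
    rw [hkeya]
    rcases le_or_gt 2 p with hp2 | hp2
    · -- p ≥ 2 : superadditivity
      have := superadd ha0.le hMpos.le (by linarith : (1:ℝ) ≤ p - 1)
      have hcle : c ≤ 1 := le_trans (min_le_right _ _) (min_le_left _ _)
      have : c * M ^ (p-1) ≤ M ^ (p-1) := by
        nth_rewrite 2 [← one_mul (M ^ (p-1))]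
        exact mul_le_mul_of_nonneg_right hcle (Real.rpow_nonneg hMpos.le _)
      nlinarith [superadd ha0.le hMpos.le (by linarith : (1:ℝ) ≤ p - 1)]
    · -- 1 < p < 2 : concavity
      have hconc : ConcaveOn ℝ (Set.Ici 0) fun x : ℝ => x ^ (p-1) :=
        Real.concaveOn_rpow hq.le (by linarith)
      have h4 := four_pt hconc ha0.le hMpos haM
      have h2M : (2*M) ^ (p-1) = 2 ^ (p-1) * M ^ (p-1) :=
        Real.mul_rpow (by norm_num) hMpos.le
      rw [h2M] at h4
      have hcle : c ≤ 2 ^ (p-1) - 1 := le_trans (min_le_right _ _) (min_le_right _ _)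
      have hMq : 0 ≤ M ^ (p-1) := Real.rpow_nonneg hMpos.le _
      nlinarith [h4, hcle, hMq]
end

section
/- Let $0 < s < 1$, $1 < p < \infty$, and $0 < \beta < s$. Then the integral $\int_0^1 \left(t^{p(s-\beta)} - 1\right)(1-t^{\beta})^{p-2}\, t^{\beta-1}\, (1-t)^{-sp}\, dt$ converges absolutely and is strictly negative. -/
open MeasureTheory Real Set

/-- For `0 < β < s < 1`, `1 < p`, the integral
`∫_0^1 (t^{p(s-β)} - 1)(1-t^β)^{p-2} t^{β-1} (1-t)^{-sp} dt`
converges absolutely and is strictly negative. -/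
theorem stmt_5 (s p β : ℝ) (hs0 : 0 < s) (hs1 : s < 1) (hp : 1 < p)
    (hβ0 : 0 < β) (hβs : β < s) :
    IntervalIntegrable
      (fun t => (t ^ (p * (s - β)) - 1) * (1 - t ^ β) ^ (p - 2) * t ^ (β - 1)
        * (1 - t) ^ (-(s * p))) volume 0 1 ∧
    (∫ t in (0:ℝ)..1, (t ^ (p * (s - β)) - 1) * (1 - t ^ β) ^ (p - 2) * t ^ (β - 1)
        * (1 - t) ^ (-(s * p))) < 0 := by
  have hβ1 : β < 1 := hβs.trans hs1
  have ha : 0 < p * (s - β) := mul_pos (by linarith) (by linarith)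
  set f : ℝ → ℝ := fun t => (t ^ (p * (s - β)) - 1) * (1 - t ^ β) ^ (p - 2) * t ^ (β - 1)
        * (1 - t) ^ (-(s * p)) with hf_def
  set q : ℝ := p - 1 - s * p with hq_def
  have hq : (-1 : ℝ) < q := by nlinarith
  set C : ℝ := max 1 (p * (s - β)) * max 1 (β ^ (p - 2)) with hC_def
  have hC1 : (1:ℝ) ≤ max 1 (p * (s - β)) := le_max_left _ _
  have hC2 : (1:ℝ) ≤ max 1 (β ^ (p - 2)) := le_max_left _ _
  have hC0 : 0 < C := mul_pos (by linarith) (by linarith)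
  set g : ℝ → ℝ := fun t => t ^ (β - 1) * (1 - t) ^ q with hg_def
  -- integrability of g
  have hg1 : IntervalIntegrable g volume 0 (1/2) := by
    apply (intervalIntegral.intervalIntegrable_rpow' (by linarith : (-1:ℝ) < β - 1)).mul_continuousOn
    apply ContinuousOn.rpow_const (continuous_const.sub continuous_id).continuousOn
    intro x hx
    rw [uIcc_of_le (by norm_num : (0:ℝ) ≤ 1/2)] at hx
    left
    have : x ≤ 1/2 := hx.2
    intro h
    have h' : (1:ℝ) - x = 0 := h
    linarith
  have hg2 : IntervalIntegrable g volume (1/2) 1 := by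
    have h1 : IntervalIntegrable (fun x : ℝ => (1 - x) ^ q) volume (1/2) 1 := by
      have h2 := (intervalIntegral.intervalIntegrable_rpow' (a := 0) (b := 1/2) hq).comp_sub_left 1
      norm_num at h2
      exact h2.symm
    apply h1.continuousOn_mul
    apply ContinuousOn.rpow_const continuousOn_id
    intro x hx
    rw [uIcc_of_le (by norm_num : (1:ℝ)/2 ≤ 1)] at hx
    left
    have : (1:ℝ)/2 ≤ x := hx.1
    simp only [id_eq]
    intro h; linarith
  have hg_int : IntervalIntegrable g volume 0 1 := hg1.trans hg2
  -- pointwise bound on Ioc 0 1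
  have key : ∀ t ∈ Ioc (0:ℝ) 1, ‖f t‖ ≤ ‖C * g t‖ := by
    intro t ht
    rcases eq_or_lt_of_le ht.2 with rfl | ht1
    · simp [hf_def, Real.one_rpow]
      positivity
    have ht0 : 0 < t := ht.1
    have h1t : 0 < 1 - t := by linarith
    have htβ : t ^ β < 1 := rpow_lt_one ht0.le ht1 hβ0
    have htβ0 : 0 < t ^ β := rpow_pos_of_pos ht0 _
    have hta : t ^ (p * (s - β)) < 1 := rpow_lt_one ht0.le ht1 ha
    have hA0 : 0 < (1 - t ^ β) ^ (p - 2) := rpow_pos_of_pos (by linarith) _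
    have hB0 : 0 < t ^ (β - 1) := rpow_pos_of_pos ht0 _
    have hD0 : 0 < (1 - t) ^ (-(s * p)) := rpow_pos_of_pos h1t _
    -- Bernoulli bounds
    have h1 : 1 - t ^ (p * (s - β)) ≤ max 1 (p * (s - β)) * (1 - t) := by
      have hb1 : 1 + max 1 (p * (s - β)) * (t - 1) ≤ (1 + (t - 1)) ^ max 1 (p * (s - β)) :=
        one_add_mul_self_le_rpow_one_add (by linarith) hC1
      rw [show (1 : ℝ) + (t - 1) = t by ring] at hb1
      have hb2 : t ^ max 1 (p * (s - β)) ≤ t ^ (p * (s - β)) :=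
        rpow_le_rpow_of_exponent_ge ht0 ht1.le (le_max_right _ _)
      linarith
    have h2 : β * (1 - t) ≤ 1 - t ^ β := by
      have hb1 : (1 + (t - 1)) ^ β ≤ 1 + β * (t - 1) :=
        rpow_one_add_le_one_add_mul_self (by linarith) hβ0.le hβ1.le
      rw [show (1 : ℝ) + (t - 1) = t by ring] at hb1
      linarith
    have h3 : 1 - t ^ β ≤ 1 - t := by
      have : t ^ (1:ℝ) ≤ t ^ β := rpow_le_rpow_of_exponent_ge ht0 ht1.le hβ1.le
      rw [Real.rpow_one] at this
      linarith
    have hb : (1 - t ^ β) ^ (p - 2) ≤ max 1 (β ^ (p - 2)) * (1 - t) ^ (p - 2) := by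
      rcases le_or_gt 2 p with h2p | h2p
      · have hle : (1 - t ^ β) ^ (p - 2) ≤ (1 - t) ^ (p - 2) :=
          Real.rpow_le_rpow (by linarith) h3 (by linarith)
        exact hle.trans (le_mul_of_one_le_left (rpow_nonneg h1t.le _) hC2)
      · have hle : (1 - t ^ β) ^ (p - 2) ≤ (β * (1 - t)) ^ (p - 2) :=
          rpow_le_rpow_of_nonpos (mul_pos hβ0 h1t) h2 (by linarith)
        rw [Real.mul_rpow hβ0.le h1t.le] at hle
        exact hle.trans (mul_le_mul_of_nonneg_right (le_max_right _ _) (rpow_nonneg h1t.le _))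
    -- exponent arithmetic
    have hexp : (1 - t) * ((1 - t) ^ (p - 2) * (1 - t) ^ (-(s * p))) = (1 - t) ^ q := by
      rw [← Real.rpow_add h1t]
      nth_rewrite 1 [← Real.rpow_one (1 - t)]
      rw [← Real.rpow_add h1t]
      congr 1
      rw [hq_def]; ring
    -- rewrite norms
    have habsf : ‖f t‖ = (1 - t ^ (p * (s - β))) * (1 - t ^ β) ^ (p - 2) * t ^ (β - 1)
        * (1 - t) ^ (-(s * p)) := by
      rw [hf_def]
      simp only [Real.norm_eq_abs]
      rw [abs_mul, abs_mul, abs_mul, abs_of_pos hA0, abs_of_pos hB0, abs_of_pos hD0,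
        abs_of_neg (by linarith : t ^ (p * (s - β)) - 1 < 0)]
      ring
    have hgpos : 0 < g t := mul_pos hB0 (rpow_pos_of_pos h1t _)
    have habsg : ‖C * g t‖ = C * g t := by
      rw [Real.norm_eq_abs, abs_of_pos (mul_pos hC0 hgpos)]
    rw [habsf, habsg]
    calc (1 - t ^ (p * (s - β))) * (1 - t ^ β) ^ (p - 2) * t ^ (β - 1) * (1 - t) ^ (-(s * p))
        ≤ (max 1 (p * (s - β)) * (1 - t)) * (max 1 (β ^ (p - 2)) * (1 - t) ^ (p - 2))
            * t ^ (β - 1) * (1 - t) ^ (-(s * p)) := by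
          have step : (1 - t ^ (p * (s - β))) * (1 - t ^ β) ^ (p - 2)
              ≤ (max 1 (p * (s - β)) * (1 - t)) * (max 1 (β ^ (p - 2)) * (1 - t) ^ (p - 2)) :=
            mul_le_mul h1 hb hA0.le (mul_nonneg (by linarith) h1t.le)
          exact mul_le_mul_of_nonneg_right
            (mul_le_mul_of_nonneg_right step hB0.le) hD0.le
      _ = C * (t ^ (β - 1) * ((1 - t) * ((1 - t) ^ (p - 2) * (1 - t) ^ (-(s * p))))) := by
          rw [hC_def]; ring
      _ = C * g t := by rw [hexp, hg_def]
  -- measurability of f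
  have hcont : ContinuousOn f (Ioo (0:ℝ) 1) := by
    rw [hf_def]
    apply ContinuousOn.mul
    apply ContinuousOn.mul
    apply ContinuousOn.mul
    · exact (ContinuousOn.rpow_const continuousOn_id
        (fun x hx => Or.inl (ne_of_gt hx.1))).sub continuousOn_const
    · exact ContinuousOn.rpow_const
        (continuousOn_const.sub (ContinuousOn.rpow_const continuousOn_id
          (fun x hx => Or.inl (ne_of_gt hx.1))))
        (fun x hx => Or.inl (by
          have : x ^ β < 1 := rpow_lt_one hx.1.le hx.2 hβ0
          show 1 - x ^ β ≠ 0
          intro h; linarith))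
    · exact ContinuousOn.rpow_const continuousOn_id (fun x hx => Or.inl (ne_of_gt hx.1))
    · exact ContinuousOn.rpow_const (continuousOn_const.sub continuousOn_id)
        (fun x hx => Or.inl (by show 1 - x ≠ 0; intro h; have := hx.2; linarith))
  have hrestr : volume.restrict (uIoc (0:ℝ) 1) = volume.restrict (Ioo (0:ℝ) 1) := by
    rw [uIoc_of_le (by norm_num : (0:ℝ) ≤ 1)]
    exact (Measure.restrict_congr_set Ioo_ae_eq_Ioc).symm
  have hfm : AEStronglyMeasurable f (volume.restrict (uIoc (0:ℝ) 1)) := by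
    rw [hrestr]
    exact hcont.aestronglyMeasurable measurableSet_Ioo
  have hf_int : IntervalIntegrable f volume 0 1 := by
    apply (hg_int.const_mul C).mono_fun hfm
    rw [uIoc_of_le (by norm_num : (0:ℝ) ≤ 1)]
    refine (ae_restrict_iff' measurableSet_Ioc).mpr (ae_of_all _ ?_)
    intro x hx
    exact key x hx
  refine ⟨hf_int, ?_⟩
  have hpos : ∀ x ∈ Ioo (0:ℝ) 1, 0 < -f x := by
    intro x hx
    have hx0 := hx.1
    have hx1 := hx.2
    have h1x : 0 < 1 - x := by linarith
    have hta : x ^ (p * (s - β)) < 1 := rpow_lt_one hx0.le hx1 ha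
    have htβ : x ^ β < 1 := rpow_lt_one hx0.le hx1 hβ0
    have hA0 : 0 < (1 - x ^ β) ^ (p - 2) := rpow_pos_of_pos (by linarith) _
    have hB0 : 0 < x ^ (β - 1) := rpow_pos_of_pos hx0 _
    have hD0 : 0 < (1 - x) ^ (-(s * p)) := rpow_pos_of_pos h1x _
    have : -f x = (1 - x ^ (p * (s - β))) * (1 - x ^ β) ^ (p - 2) * x ^ (β - 1)
        * (1 - x) ^ (-(s * p)) := by rw [hf_def]; ring
    rw [this]
    exact mul_pos (mul_pos (mul_pos (by linarith) hA0) hB0) hD0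
  have hneg : 0 < ∫ t in (0:ℝ)..1, -f t :=
    intervalIntegral.intervalIntegral_pos_of_pos_on hf_int.neg hpos (by norm_num)
  rw [intervalIntegral.integral_neg] at hneg
  linarith
end
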